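/- arXiv:1703.05519 — 3 statements merged into one kernel-verified Lean document; each statement's English description precedes it below -/
import Mathlib

section
/- Let ≻ be represented by a skew-symmetric bilinear function φ on Δ × Δ. Then every nonempty compact convex subset X of Δ contains a maximal element, i.e., there exists p ∈ X with φ(p,q) ≥ 0 for all q ∈ X. -/
/-- The SSB value of two lotteries given a matrix of pairwise utilities. -/
def phi {U : Type*} [Fintype U] (M : U → U → ℝ) (p q : U → ℝ) : ℝ :=
  ∑ a, ∑ b, p a * q b * M a b


/-- Skew-symmetric quadratic form vanishes. -/
lemma skew_sum_zero {ι : Type*} [Fintype ι] (A : ι → ι → ℝ)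
    (hA : ∀ i j, A i j = - A j i) (w : ι → ℝ) :
    ∑ i, ∑ j, w i * w j * A i j = 0 := by
  have h : (∑ i, ∑ j, w i * w j * A i j) = - ∑ i, ∑ j, w i * w j * A i j := by
    calc ∑ i, ∑ j, w i * w j * A i j
        = ∑ i, ∑ j, -(w j * w i * A j i) := by
          refine Finset.sum_congr rfl fun i _ => Finset.sum_congr rfl fun j _ => ?_
          rw [hA i j]; ring
      _ = - ∑ i, ∑ j, w j * w i * A j i := by
          simp [Finset.sum_neg_distrib]
      _ = - ∑ i, ∑ j, w i * w j * A i j := by rw [Finset.sum_comm]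
  linarith

/-- Every finite symmetric (skew-payoff) game has a maximin strategy with value ≥ 0. -/
lemma skew_game_value {ι : Type*} [Fintype ι] [Nonempty ι] (A : ι → ι → ℝ)
    (hA : ∀ i j, A i j = - A j i) :
    ∃ w ∈ stdSimplex ℝ ι, ∀ j, 0 ≤ ∑ i, w i * A i j := by
  classical
  set L : (ι → ℝ) → (ι → ℝ) := fun w j => ∑ i, w i * A i j with hL
  set D : Set (ι → ℝ) := L '' stdSimplex ℝ ι with hD
  set P : Set (ι → ℝ) := {y | ∀ j, 0 ≤ y j} with hP
  by_contra hcon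
  push_neg at hcon
  have hdisj : Disjoint D P := by
    rw [Set.disjoint_left]
    rintro y ⟨w, hw, rfl⟩ hyP
    obtain ⟨j, hj⟩ := hcon w hw
    exact absurd (hyP j) (not_le.mpr hj)
  have hLlin : IsLinearMap ℝ L := by
    constructor
    · intro x y; funext j; simp [hL, add_mul, Finset.sum_add_distrib]
    · intro c x; funext j; simp [hL, Finset.mul_sum, mul_assoc]
  have hDcv : Convex ℝ D := (convex_stdSimplex ℝ ι).is_linear_image hLlin
  have hLcont : Continuous L := by
    apply continuous_pi
    intro j
    exact continuous_finset_sum _ fun i _ => (continuous_apply i).mul continuous_const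
  have hDcp : IsCompact D := (isCompact_stdSimplex ℝ ι).image hLcont
  have hPcv : Convex ℝ P := by
    intro x hx y hy a b ha hb _
    intro j
    have h1 := hx j; have h2 := hy j
    have : (0:ℝ) ≤ a * x j + b * y j := by positivity
    simpa using this
  have hPcl : IsClosed P := by
    have : P = ⋂ j, {y : ι → ℝ | 0 ≤ y j} := by ext y; simp [hP]
    rw [this]
    exact isClosed_iInter fun j => isClosed_le continuous_const (continuous_apply j)
  obtain ⟨f, u, v, hfD, huv, hfP⟩ :=
    geometric_hahn_banach_compact_closed hDcv hDcp hPcv hPcl hdisj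
  have hv0 : v < 0 := by simpa using hfP 0 (fun j => le_refl 0)
  set y : ι → ℝ := fun j => f (fun k => if k = j then (1:ℝ) else 0) with hy
  have hfeval : ∀ z : ι → ℝ, f z = ∑ j, z j * y j := by
    intro z
    have hz : z = ∑ j, z j • (fun k => if k = j then (1:ℝ) else 0) := by
      funext k
      simp [Finset.sum_apply, Finset.sum_ite_eq]
    conv_lhs => rw [hz]
    rw [map_sum]
    simp [hy, smul_eq_mul]
  have hy0 : ∀ j, 0 ≤ y j := by
    intro j
    by_contra hneg
    push_neg at hneg
    have ht : (v / y j) • (fun k => if k = j then (1:ℝ) else 0) ∈ P := by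
      intro k
      have hd : 0 ≤ v / y j := le_of_lt (div_pos_of_neg_of_neg hv0 hneg)
      simp only [Pi.smul_apply, smul_eq_mul]
      split <;> simp [hd]
    have h3 := hfP _ ht
    rw [map_smul] at h3
    simp only [smul_eq_mul, ← hy] at h3
    rw [div_mul_cancel₀ v (ne_of_lt hneg)] at h3
    exact lt_irrefl v h3
  have hS : 0 < ∑ j, y j := by
    rcases (Finset.sum_nonneg fun j _ => hy0 j).lt_or_eq with h | h
    · exact h
    · exfalso
      have hyzero : ∀ j, y j = 0 := fun j =>
        (Finset.sum_eq_zero_iff_of_nonneg fun j _ => hy0 j).mp h.symm j (Finset.mem_univ j)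
      obtain ⟨w0, hw0⟩ : (stdSimplex ℝ ι).Nonempty :=
        ⟨_, ite_eq_mem_stdSimplex ℝ (Classical.arbitrary ι)⟩
      have h4 := hfD (L w0) ⟨w0, hw0, rfl⟩
      rw [hfeval] at h4
      simp [hyzero] at h4
      linarith
  set μ : ι → ℝ := fun j => (∑ k, y k)⁻¹ * y j with hμ
  have hμS : μ ∈ stdSimplex ℝ ι := by
    constructor
    · intro j; exact mul_nonneg (inv_nonneg.mpr hS.le) (hy0 j)
    · simp [hμ, ← Finset.mul_sum, inv_mul_cancel₀ (ne_of_gt hS)]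
  have hyμ : ∀ j, y j = (∑ k, y k) * μ j := by
    intro j; rw [hμ]; field_simp
  have hlt := hfD _ ⟨μ, hμS, rfl⟩
  rw [hfeval] at hlt
  have h1 : ∑ j, L μ j * y j = ∑ j, ∑ i, (∑ k, y k) * (μ i * μ j * A i j) := by
    refine Finset.sum_congr rfl fun j _ => ?_
    rw [hyμ j]
    simp only [hL]
    rw [Finset.sum_mul]
    exact Finset.sum_congr rfl fun i _ => by ring
  have h2 : ∑ j, ∑ i, (∑ k, y k) * (μ i * μ j * A i j) = 0 := by
    rw [Finset.sum_comm]
    have : ∀ i : ι, ∑ j, (∑ k, y k) * (μ i * μ j * A i j)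
        = (∑ k, y k) * ∑ j, μ i * μ j * A i j := fun i => (Finset.mul_sum _ _ _).symm
    rw [Finset.sum_congr rfl fun i _ => this i, ← Finset.mul_sum,
      skew_sum_zero A hA μ, mul_zero]
  rw [h1, h2] at hlt
  linarith

lemma phi_skew {U : Type*} [Fintype U] (M : U → U → ℝ) (hskew : ∀ a b, M a b = - M b a)
    (p q : U → ℝ) : phi M p q = - phi M q p := by
  unfold phi
  calc ∑ a, ∑ b, p a * q b * M a b
      = ∑ a, ∑ b, -(q b * p a * M b a) := by
        refine Finset.sum_congr rfl fun a _ => Finset.sum_congr rfl fun b _ => ?_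
        rw [hskew a b]; ring
    _ = - ∑ a, ∑ b, q b * p a * M b a := by simp [Finset.sum_neg_distrib]
    _ = - ∑ b, ∑ a, q b * p a * M b a := by rw [Finset.sum_comm]

lemma phi_sum_left {U : Type*} [Fintype U] (M : U → U → ℝ) {κ : Type*} (s : Finset κ)
    (w : κ → ℝ) (g : κ → U → ℝ) (q : U → ℝ) :
    phi M (∑ i ∈ s, w i • g i) q = ∑ i ∈ s, w i * phi M (g i) q := by
  unfold phi
  simp only [Finset.sum_apply, Pi.smul_apply, smul_eq_mul, Finset.sum_mul, Finset.mul_sum]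
  rw [Finset.sum_congr rfl fun a (_ : a ∈ Finset.univ) => Finset.sum_comm, Finset.sum_comm]
  exact Finset.sum_congr rfl fun i _ => Finset.sum_congr rfl fun a _ =>
    Finset.sum_congr rfl fun b _ => by ring

lemma phi_continuous_left {U : Type*} [Fintype U] (M : U → U → ℝ) (q : U → ℝ) :
    Continuous fun p : U → ℝ => phi M p q := by
  unfold phi
  exact continuous_finset_sum _ fun a _ => continuous_finset_sum _ fun b _ =>
    ((continuous_apply a).mul continuous_const).mul continuous_const

/-- Every nonempty compact convex subset of the simplex contains a maximal
element of an SSB preference relation. -/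
theorem ssb_maximal_element_exists {U : Type*} [Fintype U]
    (M : U → U → ℝ) (hskew : ∀ a b, M a b = - M b a)
    (X : Set (U → ℝ)) (hXne : X.Nonempty) (hXcp : IsCompact X)
    (hXcv : Convex ℝ X) (hXsub : X ⊆ stdSimplex ℝ U) :
    ∃ p ∈ X, ∀ q ∈ X, phi M p q ≥ 0 := by
  classical
  have key := hXcp.inter_iInter_nonempty (fun q : X => {p | 0 ≤ phi M p q.1})
    (fun q => isClosed_le continuous_const (phi_continuous_left M q.1)) ?_
  · obtain ⟨p, hpX, hp⟩ := key
    simp only [Set.mem_iInter, Set.mem_setOf_eq] at hp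
    exact ⟨p, hpX, fun q hq => hp ⟨q, hq⟩⟩
  · intro t
    rcases t.eq_empty_or_nonempty with rfl | ht
    · simpa using hXne
    haveI : Nonempty {x // x ∈ t} := ht.to_subtype
    set A : {x // x ∈ t} → {x // x ∈ t} → ℝ := fun i j => phi M i.1.1 j.1.1 with hAdef
    have hAskew : ∀ i j, A i j = - A j i := fun i j => phi_skew M hskew _ _
    obtain ⟨w, hw, hwv⟩ := skew_game_value A hAskew
    set p : U → ℝ := ∑ i : {x // x ∈ t}, w i • (i.1.1 : U → ℝ) with hp
    have hpX : p ∈ X := hXcv.sum_mem (fun i _ => hw.1 i) hw.2 (fun i _ => i.1.2)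
    refine ⟨p, hpX, ?_⟩
    simp only [Set.mem_iInter, Set.mem_setOf_eq]
    intro q hq
    have := hwv ⟨q, hq⟩
    rw [hp, phi_sum_left]
    exact this
end

section
/- For the PC (pairwise comparison) preference relation induced by the strict linear order a ≻₀ b ≻₀ c ≻₀ d on four alternatives, the three lotteries p = c (pure), q = (2/5)a + (3/5)d, and r = (3/5)b + (2/5)d form a strict preference cycle: p ≻ q, q ≻ r, and r ≻ p. -/
/-- Steinhaus–Trybula paradox: for the PC extension of the linear order
a ≻ b ≻ c ≻ d (alternatives 0,1,2,3), the lotteries p = c,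
q = (2/5)a + (3/5)d, and r = (3/5)b + (2/5)d form a strict cycle. -/
theorem pc_cycle :
    let M : Fin 4 → Fin 4 → ℝ := fun i j => if i < j then 1 else if j < i then -1 else 0
    let p : Fin 4 → ℝ := ![0, 0, 1, 0]
    let q : Fin 4 → ℝ := ![2/5, 0, 0, 3/5]
    let r : Fin 4 → ℝ := ![0, 3/5, 0, 2/5]
    phi M p q > 0 ∧ phi M q r > 0 ∧ phi M r p > 0 := by
  refine ⟨?_, ?_, ?_⟩ <;>
  · simp only [phi, Fin.sum_univ_four, Matrix.cons_val_zero, Matrix.cons_val_one,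
      Matrix.head_cons, Matrix.cons_val_two, Matrix.tail_cons, Matrix.cons_val_three]
    norm_num [Fin.lt_def, Fin.ext_iff, show ((3:Fin 4):ℕ) = 3 from rfl]
end

section
/- If a choice function S on the family of nonempty compact convex subsets of Δ is rationalizable by a preference relation ≻ (i.e., S(X) = max_≻ X for all feasible X) whose weak lower contour sets L(p) ∪ I(p) are convex, then S satisfies expansion: for all feasible X, Y, S(X) ∩ S(Y) ⊆ S(conv(X ∪ Y)). -/
/-- A feasible set: a nonempty compact convex subset of the simplex. -/
def feasible {U : Type*} [Fintype U] (X : Set (U → ℝ)) : Prop :=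
  X.Nonempty ∧ IsCompact X ∧ Convex ℝ X ∧ X ⊆ stdSimplex ℝ U


lemma isCompact_convexJoin {E : Type*} [AddCommGroup E] [Module ℝ E]
    [TopologicalSpace E] [IsTopologicalAddGroup E] [ContinuousSMul ℝ E]
    {X Y : Set E} (hX : IsCompact X) (hY : IsCompact Y) :
    IsCompact (convexJoin ℝ X Y) := by
  have : convexJoin ℝ X Y =
      (fun p : ℝ × E × E => (1 - p.1) • p.2.1 + p.1 • p.2.2) ''
        (Set.Icc (0:ℝ) 1 ×ˢ X ×ˢ Y) := by
    ext x
    simp only [convexJoin, Set.mem_iUnion, Set.mem_image, Set.mem_prod]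
    constructor
    · rintro ⟨a, ha, b, hb, hx⟩
      rw [segment_eq_image] at hx
      obtain ⟨t, ht, rfl⟩ := hx
      exact ⟨⟨t, a, b⟩, ⟨ht, ha, hb⟩, rfl⟩
    · rintro ⟨⟨t, a, b⟩, ⟨ht, ha, hb⟩, rfl⟩
      exact ⟨a, ha, b, hb, segment_eq_image ℝ a b ▸ ⟨t, ht, rfl⟩⟩
  rw [this]
  exact ((isCompact_Icc.prod (hX.prod hY))).image (by fun_prop)

/-- A choice function rationalized by a preference relation with convex weak
lower contour sets satisfies expansion. -/
theorem rationalizable_expansion {U : Type*} [Fintype U]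
    (pref : (U → ℝ) → (U → ℝ) → Prop)
    (hasym : ∀ p q, pref p q → ¬ pref q p)
    (hconv : ∀ p ∈ stdSimplex ℝ U, Convex ℝ {q | q ∈ stdSimplex ℝ U ∧ ¬ pref q p})
    (S : Set (U → ℝ) → Set (U → ℝ))
    (hrat : ∀ X, feasible X → S X = {x ∈ X | ∀ y ∈ X, ¬ pref y x})
    (X Y : Set (U → ℝ)) (hX : feasible X) (hY : feasible Y) :
    S X ∩ S Y ⊆ S (convexHull ℝ (X ∪ Y)) := by
  obtain ⟨⟨hXne, hXc, hXcv, hXs⟩⟩ := And.intro hX trivial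
  obtain ⟨hYne, hYc, hYcv, hYs⟩ := hY
  have hZ : feasible (convexHull ℝ (X ∪ Y)) := by
    refine ⟨hXne.mono ((Set.subset_union_left).trans (subset_convexHull ℝ _)),
      by
        rw [Convex.convexHull_union hXcv hYcv hXne hYne]
        exact isCompact_convexJoin hXc hYc, convex_convexHull ℝ _, ?_⟩
    exact convexHull_min (Set.union_subset hXs hYs) (convex_stdSimplex ℝ U)
  intro x hx
  rw [hrat X hX, hrat Y ⟨hYne, hYc, hYcv, hYs⟩] at hx
  obtain ⟨⟨hxX, hmaxX⟩, hxY, hmaxY⟩ := hx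
  rw [hrat _ hZ]
  refine ⟨subset_convexHull ℝ _ (Or.inl hxX), fun y hy => ?_⟩
  have hsub : convexHull ℝ (X ∪ Y) ⊆ {q | q ∈ stdSimplex ℝ U ∧ ¬ pref q x} := by
    apply convexHull_min _ (hconv x (hXs hxX))
    rintro q (hq | hq)
    · exact ⟨hXs hq, hmaxX q hq⟩
    · exact ⟨hYs hq, hmaxY q hq⟩
  exact (hsub hy).2
end
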